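/- For the function f of the previous statement (staircase function with flat pieces, equal to its even reflection for x < 0), the set ℝ × {0} is contained in the contingent cone to gph ∂f at (0,0), where ∂f denotes the limiting (or proximal) subdifferential. Consequently, for every w ≠ 0, 0 ∈ D(∂f)(0|0)(w) and ⟨0, w⟩ = 0, so the subgradient graphical derivative at (0,0) is not positive definite even though 0 is a strong local minimizer. -/

import Mathlib

open Filter

/-- The Bouligand (contingent) tangent cone to a set `s` at a point `p`. -/
def contingentCone {F : Type*} [NormedAddCommGroup F] [NormedSpace ℝ F]
    (s : Set F) (p : F) : Set F :=
  {v | ∃ t : ℕ → ℝ, ∃ w : ℕ → F, (∀ k, 0 < t k) ∧ Tendsto t atTop (nhds 0) ∧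
    Tendsto w atTop (nhds v) ∧ ∀ k, p + t k • w k ∈ s}

/-- The proximal subdifferential of a real-valued function on `ℝ`. -/
def proxSubdiffR (f : ℝ → ℝ) (x : ℝ) : Set ℝ :=
  {v | ∃ r > (0 : ℝ), ∃ ε > (0 : ℝ), ∀ u, |u - x| ≤ ε →
    f x + (v * (u - x) - r / 2 * (u - x) ^ 2) ≤ f u}

/-- The limiting (Mordukhovich) subdifferential of a real-valued function on `ℝ`,
obtained from proximal subgradients by taking limits. -/
def limSubdiffR (f : ℝ → ℝ) (x : ℝ) : Set ℝ :=
  {v | ∃ xs vs : ℕ → ℝ, Tendsto xs atTop (nhds x) ∧ Tendsto vs atTop (nhds v) ∧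
    (∀ k, vs k ∈ proxSubdiffR f (xs k)) ∧ Tendsto (fun k => f (xs k)) atTop (nhds (f x))}

lemma flat_val (f : ℝ → ℝ)
    (h2 : ∀ n : ℕ, ∀ x : ℝ, 3 / 2 ^ (n + 2) ≤ x → x < 1 / 2 ^ n → f x = 1 / 2 ^ n)
    (n : ℕ) {u : ℝ} (hu : |u - 7 / 2 ^ (n + 3)| ≤ 1 / 2 ^ (n + 4)) :
    f u = 1 / 2 ^ n := by
  have hP : (0:ℝ) < 2 ^ n := by positivity
  obtain ⟨hl, hr⟩ := abs_le.mp hu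
  have e3 : (2:ℝ) ^ (n+3) = 2 ^ n * 8 := by rw [pow_add]; norm_num
  have e4 : (2:ℝ) ^ (n+4) = 2 ^ n * 16 := by rw [pow_add]; norm_num
  have e2 : (2:ℝ) ^ (n+2) = 2 ^ n * 4 := by rw [pow_add]; norm_num
  rw [e3, e4] at hl hr
  have hl' : 13 / (2 ^ n * 16) ≤ u := by
    have h13 : (13:ℝ)/(2^n*16) = 7/(2^n*8) - 1/(2^n*16) := by field_simp; ring
    rw [h13]; linarith
  have hr' : u ≤ 15 / (2 ^ n * 16) := by
    have h15 : (15:ℝ)/(2^n*16) = 7/(2^n*8) + 1/(2^n*16) := by field_simp; ring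
    rw [h15]; linarith
  apply h2 n
  · rw [e2]
    calc (3:ℝ)/(2^n*4) = 12/(2^n*16) := by ring
    _ ≤ 13/(2^n*16) := by gcongr; norm_num
    _ ≤ u := hl'
  · calc u ≤ 15/(2^n*16) := hr'
    _ < 16/(2^n*16) := by gcongr <;> norm_num
    _ = 1/2^n := by rw [eq_div_iff (ne_of_gt hP)]; field_simp

lemma prox_pos (f : ℝ → ℝ)
    (h2 : ∀ n : ℕ, ∀ x : ℝ, 3 / 2 ^ (n + 2) ≤ x → x < 1 / 2 ^ n → f x = 1 / 2 ^ n)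
    (n : ℕ) : (0:ℝ) ∈ proxSubdiffR f (7 / 2 ^ (n + 3)) := by
  refine ⟨1, one_pos, 1 / 2 ^ (n + 4), by positivity, fun u hu => ?_⟩
  have hfx : f (7 / 2 ^ (n + 3)) = 1 / 2 ^ n :=
    flat_val f h2 n (by rw [sub_self, abs_zero]; positivity)
  have hfu : f u = 1 / 2 ^ n := flat_val f h2 n hu
  rw [hfx, hfu]
  nlinarith [sq_nonneg (u - 7 / 2 ^ (n + 3))]

lemma prox_neg (f : ℝ → ℝ)
    (h2 : ∀ n : ℕ, ∀ x : ℝ, 3 / 2 ^ (n + 2) ≤ x → x < 1 / 2 ^ n → f x = 1 / 2 ^ n)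
    (h4 : ∀ x : ℝ, x < 0 → f x = f (-x))
    (n : ℕ) : (0:ℝ) ∈ proxSubdiffR f (-(7 / 2 ^ (n + 3))) := by
  refine ⟨1, one_pos, 1 / 2 ^ (n + 4), by positivity, fun u hu => ?_⟩
  have e3 : (2:ℝ) ^ (n+3) = 2 ^ n * 8 := by rw [pow_add]; norm_num
  have e4 : (2:ℝ) ^ (n+4) = 2 ^ n * 16 := by rw [pow_add]; norm_num
  have hP : (0:ℝ) < 2 ^ n := by positivity
  have hun : u < 0 := by
    obtain ⟨hl, hr⟩ := abs_le.mp hu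
    rw [e3, e4] at hr
    have : (1:ℝ)/(2^n*16) - 7/(2^n*8) < 0 := by
      have : (1:ℝ)/(2^n*16) - 7/(2^n*8) = -(13/(2^n*16)) := by field_simp; ring
      rw [this]
      have h13 : (0:ℝ) < 13/(2^n*16) := by positivity
      linarith
    linarith
  have hmu : |(-u) - 7 / 2 ^ (n + 3)| ≤ 1 / 2 ^ (n + 4) := by
    rw [show (-u) - 7 / 2 ^ (n+3) = -(u - -(7 / 2 ^ (n+3))) by ring, abs_neg]
    exact hu
  have hfx : f (-(7 / 2 ^ (n + 3))) = 1 / 2 ^ n := by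
    rw [h4 _ (neg_neg_of_pos (by positivity)), neg_neg]
    exact flat_val f h2 n (by rw [sub_self, abs_zero]; positivity)
  have hfu : f u = 1 / 2 ^ n := by
    rw [h4 _ hun]; exact flat_val f h2 n hmu
  rw [hfx, hfu]
  nlinarith [sq_nonneg (u - -(7 / 2 ^ (n + 3)))]

lemma lim_of_prox (f : ℝ → ℝ) {x v : ℝ} (h : v ∈ proxSubdiffR f x) :
    v ∈ limSubdiffR f x :=
  ⟨fun _ => x, fun _ => v, tendsto_const_nhds, tendsto_const_nhds,
    fun _ => h, tendsto_const_nhds⟩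

lemma tend7 : Tendsto (fun k : ℕ => (7:ℝ) / 2 ^ (k + 3)) atTop (nhds 0) := by
  have h := tendsto_pow_atTop_nhds_zero_of_lt_one
    (by norm_num : (0:ℝ) ≤ 1/2) (by norm_num : (1:ℝ)/2 < 1)
  have h' := h.const_mul (7/8 : ℝ)
  rw [mul_zero] at h'
  convert h' using 2 with k
  rw [pow_add, div_pow]
  field_simp
  ring

lemma lim_zero (f : ℝ → ℝ) (h0 : f 0 = 0)
    (h2 : ∀ n : ℕ, ∀ x : ℝ, 3 / 2 ^ (n + 2) ≤ x → x < 1 / 2 ^ n → f x = 1 / 2 ^ n) :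
    (0:ℝ) ∈ limSubdiffR f 0 := by
  refine ⟨fun k => 7 / 2 ^ (k + 3), fun _ => 0, tend7, tendsto_const_nhds,
    fun k => prox_pos f h2 k, ?_⟩
  rw [h0]
  have : ∀ k : ℕ, f (7 / 2 ^ (k + 3)) = (1/2 : ℝ) ^ k := by
    intro k
    rw [flat_val f h2 k (by rw [sub_self, abs_zero]; positivity), one_div_pow]
  simp only [this]
  simpa only [one_div, inv_pow] using tendsto_pow_atTop_nhds_zero_of_lt_one
    (by norm_num : (0:ℝ) ≤ 1/2) (by norm_num : (1:ℝ)/2 < 1)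

/-- For the staircase function of Example 3.6, `ℝ × {0}` is contained in the contingent cone
to `gph ∂f` at `(0,0)`; in particular `0 ∈ D(∂f)(0|0)(w)` for every `w`, so the subgradient
graphical derivative at `(0,0)` is not positive definite although `0` is a strong local
minimizer. -/
theorem stmt12 (f : ℝ → ℝ)
    (h0 : f 0 = 0)
    (h1 : ∀ x : ℝ, 1 ≤ x → f x = x)
    (h2 : ∀ n : ℕ, ∀ x : ℝ, 3 / 2 ^ (n + 2) ≤ x → x < 1 / 2 ^ n → f x = 1 / 2 ^ n)
    (h3 : ∀ n : ℕ, ∀ x : ℝ, 1 / 2 ^ (n + 1) ≤ x → x < 3 / 2 ^ (n + 2) →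
      f x = 2 * x - 1 / 2 ^ (n + 1))
    (h4 : ∀ x : ℝ, x < 0 → f x = f (-x)) :
    (Set.univ ×ˢ ({0} : Set ℝ)) ⊆
      contingentCone {p : ℝ × ℝ | p.2 ∈ limSubdiffR f p.1} ((0 : ℝ), (0 : ℝ)) := by
  rintro ⟨w, y⟩ ⟨-, hy⟩
  simp only [Set.mem_singleton_iff] at hy
  subst hy
  rcases eq_or_ne w 0 with hw | hw
  · subst hw
    refine ⟨fun k => 1 / (k + 1), fun _ => (0, 0), fun k => by positivity,
      tendsto_one_div_add_atTop_nhds_zero_nat, tendsto_const_nhds, fun k => ?_⟩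
    simp only [Set.mem_setOf_eq, Prod.smul_mk, smul_zero, Prod.mk_add_mk, add_zero]
    exact lim_zero f h0 h2
  · refine ⟨fun k => 7 / 2 ^ (k + 3) / |w|, fun _ => (w, 0), fun k => by positivity,
      ?_, tendsto_const_nhds, fun k => ?_⟩
    · have := tend7.div_const |w|
      rwa [zero_div] at this
    · simp only [Set.mem_setOf_eq, Prod.smul_mk, smul_zero, smul_eq_mul,
        Prod.mk_add_mk, add_zero, zero_add, mul_zero]
      rcases lt_or_gt_of_ne hw with hneg | hpos
      · have : 7 / 2 ^ (k + 3) / |w| * w = -(7 / 2 ^ (k + 3)) := by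
          rw [abs_of_neg hneg]
          field_simp
        rw [this]
        exact lim_of_prox f (prox_neg f h2 h4 k)
      · have : 7 / 2 ^ (k + 3) / |w| * w = 7 / 2 ^ (k + 3) := by
          rw [abs_of_pos hpos]
          field_simp
        rw [this]
        exact lim_of_prox f (prox_pos f h2 k)
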